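/- Let Y be a real random variable on a probability space, let κ, m, v, w > 0 satisfy P(|Y| ≥ u) ≤ κ exp(−m u² / (v + w u)) for every u ≥ 0, and let V ≥ 0. Then E[max(4Y² − V, 0)] ≤ κ [ (8v/m) exp(−m V / (8v)) + (8w/m) (√V + 4w/m) exp(−m √V / (4w)) ]. -/

import Mathlib

open MeasureTheory Real Filter Set Topology

section Aux

variable {m v w V : ℝ}

private lemma integralA (hm : 0 < m) (hv : 0 < v) (hV : 0 ≤ V) :
    ∫ t in Ioi (0:ℝ), Real.exp (-(m*(V+t))/(8*v)) =
      8*v/m * Real.exp (-(m*V)/(8*v)) ∧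
    IntegrableOn (fun t => Real.exp (-(m*(V+t))/(8*v))) (Ioi (0:ℝ)) := by
  have key : ∀ t : ℝ, HasDerivAt (fun t => -(8*v/m) * Real.exp (-(m*(V+t))/(8*v)))
      (Real.exp (-(m*(V+t))/(8*v))) t := by
    intro t
    have h1 : HasDerivAt (fun t : ℝ => -(m*(V+t))/(8*v)) (-(m*1)/(8*v)) t :=
      (((hasDerivAt_id t).const_add V).const_mul m).neg.div_const (8*v)
    have h2 := (h1.exp).const_mul (-(8*v/m))
    refine h2.congr_deriv ?_
    field_simp
  have htend : Tendsto (fun t => -(8*v/m) * Real.exp (-(m*(V+t))/(8*v))) atTop (𝓝 0) := by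
    have h1 : Tendsto (fun t : ℝ => -(m*(V+t))/(8*v)) atTop atBot := by
      apply Tendsto.atBot_div_const (by positivity)
      apply tendsto_neg_atBot_iff.mpr
      exact (tendsto_atTop_add_const_left _ V tendsto_id).const_mul_atTop hm
    have := (Real.tendsto_exp_atBot.comp h1).const_mul (-(8*v/m))
    simpa using this
  refine ⟨?_, integrableOn_Ioi_deriv_of_nonneg ((key 0).continuousAt.continuousWithinAt)
    (fun x _ => key x) (fun x _ => (Real.exp_pos _).le) htend⟩
  have := integral_Ioi_of_hasDerivAt_of_nonneg
    ((key 0).continuousAt.continuousWithinAt) (fun x _ => key x)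
    (fun x _ => (Real.exp_pos _).le) htend
  rw [this]
  ring

private lemma integralB (hm : 0 < m) (hw : 0 < w) (hV : 0 ≤ V) :
    ∫ t in Ioi (0:ℝ), Real.exp (-(m*Real.sqrt (V+t))/(4*w)) =
      8*w/m * (Real.sqrt V + 4*w/m) * Real.exp (-(m*Real.sqrt V)/(4*w)) ∧
    IntegrableOn (fun t => Real.exp (-(m*Real.sqrt (V+t))/(4*w))) (Ioi (0:ℝ)) := by
  set g : ℝ → ℝ := fun t =>
    -(8*w/m) * ((Real.sqrt (V+t) + 4*w/m) * Real.exp (-(m*Real.sqrt (V+t))/(4*w))) with hg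
  have key : ∀ t ∈ Ioi (0:ℝ), HasDerivAt g (Real.exp (-(m*Real.sqrt (V+t))/(4*w))) t := by
    intro t ht
    have hpos : (0:ℝ) < V + t := by simp only [mem_Ioi] at ht; linarith
    have hs : HasDerivAt (fun t : ℝ => Real.sqrt (V+t)) (1/(2*Real.sqrt (V+t)) * 1) t :=
      (Real.hasDerivAt_sqrt hpos.ne').comp t ((hasDerivAt_id t).const_add V)
    have hexp : HasDerivAt (fun t : ℝ => Real.exp (-(m*Real.sqrt (V+t))/(4*w)))
        (Real.exp (-(m*Real.sqrt (V+t))/(4*w)) * ((-(m*(1/(2*Real.sqrt (V+t)) * 1)))/(4*w))) t :=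
      ((hs.const_mul m).neg.div_const (4*w)).exp
    have h2 := ((hs.add_const (4*w/m)).mul hexp).const_mul (-(8*w/m))
    refine h2.congr_deriv ?_
    have hsq : Real.sqrt (V+t) ≠ 0 := (Real.sqrt_pos.mpr hpos).ne'
    field_simp
    ring
  have htend : Tendsto g atTop (𝓝 0) := by
    have hsqrt : Tendsto (fun t : ℝ => Real.sqrt (V+t)) atTop atTop := by
      have h0 : Tendsto Real.sqrt atTop atTop :=
        (tendsto_rpow_atTop (by norm_num : (0:ℝ) < 1/2)).congr
          fun x => (Real.sqrt_eq_rpow x).symm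
      exact h0.comp (tendsto_atTop_add_const_left _ V tendsto_id)
    have hφ : Tendsto (fun x : ℝ => -(8*w/m) * ((x + 4*w/m) * Real.exp (-(m*x)/(4*w))))
        atTop (𝓝 0) := by
      simp only [show ∀ x:ℝ, -(m*x)/(4*w) = -(m/(4*w))*x from fun x => by ring]
      have h1 : Tendsto (fun x : ℝ => x * Real.exp (-(m/(4*w)) * x)) atTop (𝓝 0) := by
        have := tendsto_rpow_mul_exp_neg_mul_atTop_nhds_zero 1 (m/(4*w)) (by positivity)
        refine this.congr' ?_
        filter_upwards [eventually_ge_atTop (0:ℝ)] with x hx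
        rw [Real.rpow_one]
      have h2 : Tendsto (fun x : ℝ => Real.exp (-(m/(4*w)) * x)) atTop (𝓝 0) := by
        have ha : Tendsto (fun x : ℝ => -((m/(4*w)) * x)) atTop atBot :=
          tendsto_neg_atBot_iff.mpr (tendsto_id.const_mul_atTop (by positivity))
        exact (Real.tendsto_exp_atBot.comp ha).congr fun x => by rw [Function.comp_apply, neg_mul]
      have := ((h1.add (h2.const_mul (4*w/m))).const_mul (-(8*w/m)))
      simp only [mul_zero, zero_add, add_zero, mul_add] at this ⊢
      refine this.congr fun x => by ring
    have := hφ.comp hsqrt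
    simpa [Function.comp_def, hg] using this
  have hcont : ContinuousWithinAt g (Ici (0:ℝ)) 0 :=
    Continuous.continuousWithinAt (by fun_prop)
  refine ⟨?_, integrableOn_Ioi_deriv_of_nonneg hcont key
    (fun x _ => (Real.exp_pos _).le) htend⟩
  have := integral_Ioi_of_hasDerivAt_of_nonneg hcont key
    (fun x _ => (Real.exp_pos _).le) htend
  rw [this, hg]
  simp only [add_zero]
  ring

end Aux

/-- Expected excess over the variance threshold from a Bernstein-type tail: if
`P(|Y| ≥ u) ≤ κ exp(-m u² / (v + w u))` for every `u ≥ 0` and `V ≥ 0`, then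
`E[{4Y² - V}_+] ≤ κ [(8v/m) exp(-mV/(8v)) + (8w/m)(√V + 4w/m) exp(-m√V/(4w))]`. -/
theorem excess_moment_from_bernstein_tail {Ω : Type*} [MeasurableSpace Ω]
    (P : Measure Ω) [IsProbabilityMeasure P] (Y : Ω → ℝ) (hY : Measurable Y)
    (κ m v w : ℝ) (hκ : 0 < κ) (hm : 0 < m) (hv : 0 < v) (hw : 0 < w)
    (htail : ∀ u : ℝ, 0 ≤ u →
      P {ω | u ≤ |Y ω|} ≤ ENNReal.ofReal (κ * Real.exp (-(m * u ^ 2) / (v + w * u))))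
    (V : ℝ) (hV : 0 ≤ V) :
    ∫⁻ ω, ENNReal.ofReal (max (4 * Y ω ^ 2 - V) 0) ∂P ≤
      ENNReal.ofReal (κ *
        (8 * v / m * Real.exp (-(m * V) / (8 * v)) +
          8 * w / m * (Real.sqrt V + 4 * w / m) *
            Real.exp (-(m * Real.sqrt V) / (4 * w)))) := by
  obtain ⟨hIA, hintA⟩ := integralA (v := v) (V := V) hm hv hV
  obtain ⟨hIB, hintB⟩ := integralB (w := w) (V := V) hm hw hV
  have hmble : Measurable fun ω => max (4 * Y ω ^ 2 - V) 0 := by measurability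
  have hlayer : ∫⁻ ω, ENNReal.ofReal (max (4 * Y ω ^ 2 - V) 0) ∂P =
      ∫⁻ t in Ioi (0:ℝ), P {ω | t ≤ max (4 * Y ω ^ 2 - V) 0} :=
    lintegral_eq_lintegral_meas_le P (ae_of_all _ fun ω => le_max_right _ _)
      hmble.aemeasurable
  have hstep : ∀ t ∈ Ioi (0:ℝ), P {ω | t ≤ max (4 * Y ω ^ 2 - V) 0} ≤
      ENNReal.ofReal (κ * (Real.exp (-(m*(V+t))/(8*v)) +
        Real.exp (-(m*Real.sqrt (V+t))/(4*w)))) := by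
    intro t ht
    rw [mem_Ioi] at ht
    have hVt : (0:ℝ) < V + t := by linarith
    set u : ℝ := Real.sqrt (V + t) / 2 with hu
    have hu0 : 0 ≤ u := by positivity
    have hsq2 : Real.sqrt (V + t) = 2 * u := by rw [hu]; ring
    have hset : {ω | t ≤ max (4 * Y ω ^ 2 - V) 0} = {ω | u ≤ |Y ω|} := by
      ext ω
      simp only [mem_setOf_eq, le_max_iff]
      constructor
      · rintro (h | h)
        · have h4 : V + t ≤ (2 * |Y ω|) ^ 2 := by
            have he : (2 * |Y ω|) ^ 2 = 4 * Y ω ^ 2 := by rw [mul_pow, sq_abs]; ring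
            linarith [he.ge]
          have h5 : Real.sqrt (V + t) ≤ 2 * |Y ω| := by
            have := Real.sqrt_le_sqrt h4
            rwa [Real.sqrt_sq (by positivity)] at this
          rw [hu]; linarith
        · linarith
      · intro h
        left
        have h5 : Real.sqrt (V + t) ≤ 2 * |Y ω| := by rw [hsq2]; linarith
        have h4 : V + t ≤ (2 * |Y ω|) ^ 2 := by
          calc V + t = Real.sqrt (V + t) ^ 2 := (Real.sq_sqrt hVt.le).symm
            _ ≤ (2 * |Y ω|) ^ 2 := pow_le_pow_left₀ (Real.sqrt_nonneg _) h5 2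
        have he : (2 * |Y ω|) ^ 2 = 4 * Y ω ^ 2 := by rw [mul_pow, sq_abs]; ring
        linarith [he.le]
    rw [hset]
    refine (htail u hu0).trans (ENNReal.ofReal_le_ofReal ?_)
    refine mul_le_mul_of_nonneg_left ?_ hκ.le
    have hu2 : u ^ 2 = (V + t) / 4 := by
      rw [hu, div_pow, Real.sq_sqrt hVt.le]; norm_num
    rcases le_total (w * u) v with hcase | hcase
    · have hden : (0:ℝ) < v + w * u := by positivity
      have hkey : -(m * u ^ 2) / (v + w * u) ≤ -(m * (V + t)) / (8 * v) := by
        rw [neg_div, neg_div, neg_le_neg_iff, hu2, div_le_div_iff₀ (by positivity) hden]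
        nlinarith [mul_nonneg hm.le hVt.le]
      calc Real.exp (-(m * u ^ 2) / (v + w * u)) ≤ Real.exp (-(m*(V+t))/(8*v)) :=
            Real.exp_le_exp.mpr hkey
        _ ≤ _ := le_add_of_nonneg_right (Real.exp_pos _).le
    · have hupos : 0 < u := by nlinarith
      have hden : (0:ℝ) < v + w * u := by positivity
      have hkey : -(m * u ^ 2) / (v + w * u) ≤ -(m * Real.sqrt (V+t)) / (4 * w) := by
        rw [neg_div, neg_div, neg_le_neg_iff, hsq2, div_le_div_iff₀ (by positivity) hden]
        nlinarith [mul_pos hm hupos]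
      calc Real.exp (-(m * u ^ 2) / (v + w * u))
            ≤ Real.exp (-(m*Real.sqrt (V+t))/(4*w)) := Real.exp_le_exp.mpr hkey
        _ ≤ _ := le_add_of_nonneg_left (Real.exp_pos _).le
  have hint : Integrable (fun t => κ * (Real.exp (-(m*(V+t))/(8*v)) +
      Real.exp (-(m*Real.sqrt (V+t))/(4*w)))) (volume.restrict (Ioi (0:ℝ))) :=
    (hintA.add hintB).const_mul κ
  calc ∫⁻ ω, ENNReal.ofReal (max (4 * Y ω ^ 2 - V) 0) ∂P
      = ∫⁻ t in Ioi (0:ℝ), P {ω | t ≤ max (4 * Y ω ^ 2 - V) 0} := hlayer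
    _ ≤ ∫⁻ t in Ioi (0:ℝ), ENNReal.ofReal (κ * (Real.exp (-(m*(V+t))/(8*v)) +
        Real.exp (-(m*Real.sqrt (V+t))/(4*w)))) :=
        setLIntegral_mono (Measurable.ennreal_ofReal (by fun_prop)) hstep
    _ = ENNReal.ofReal (∫ t in Ioi (0:ℝ), κ * (Real.exp (-(m*(V+t))/(8*v)) +
        Real.exp (-(m*Real.sqrt (V+t))/(4*w)))) :=
        (ofReal_integral_eq_lintegral_ofReal hint
          (ae_of_all _ fun t => by positivity)).symm
    _ = ENNReal.ofReal (κ *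
        (8 * v / m * Real.exp (-(m * V) / (8 * v)) +
          8 * w / m * (Real.sqrt V + 4 * w / m) *
            Real.exp (-(m * Real.sqrt V) / (4 * w)))) := by
        rw [integral_const_mul, integral_add hintA hintB, hIA, hIB]
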